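/- Let M ∈ ℝ^{N×N} be symmetric positive definite and let f : ℝ^N → ℝ be differentiable and M-smooth, i.e. f(x+h) ≤ f(x) + ⟨∇f(x),h⟩ + (1/2)·h^T·M·h for all x, h ∈ ℝ^N. Let x* be a global minimizer of f, let x ∈ ℝ^N, and let S ⊆ {1,…,N} be nonempty. Write M_S for the |S|×|S| principal submatrix of M indexed by S (which is positive definite, hence invertible) and g_S := (∇f(x))_S for the subvector of the gradient indexed by S. Define u ∈ ℝ^N by u_S := −(M_S)^{−1}·g_S and u_i := 0 for i ∉ S. Then f(x+u) − f(x*) ≤ (f(x) − f(x*)) − (1/2)·g_S^T·(M_S)^{−1}·g_S. In particular, if f(x) > f(x*), then f(x+u) − f(x*) ≤ (1 − θ(S,x)·μ(x))·(f(x) − f(x*)), where θ(S,x) := g_S^T·(M_S)^{−1}·g_S / ‖∇f(x)‖² is the proportion function and μ(x) := ‖∇f(x)‖²/(2·(f(x) − f(x*))) is the forcing function. -/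

import Mathlib

open scoped RealInnerProductSpace
open Matrix


lemma sum_extend_aux {N : ℕ} (S : Finset (Fin N)) (f : Fin N → ℝ)
    (hf : ∀ i ∉ S, f i = 0) : ∑ i, f i = ∑ i ∈ S.attach, f i.val := by
  rw [Finset.sum_attach]
  exact (Finset.sum_subset (Finset.subset_univ S) (fun i _ hi => hf i hi)).symm

lemma submatrix_posdef {N : ℕ} {M : Matrix (Fin N) (Fin N) ℝ} (hpd : M.PosDef)
    (S : Finset (Fin N)) :
    (M.submatrix (Subtype.val : S → Fin N) Subtype.val).PosDef := by
  rw [posDef_iff_dotProduct_mulVec]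
  constructor
  · have h := hpd.isHermitian
    ext i j
    simpa using h.apply i.val j.val
  · intro v hv
    set y : Fin N → ℝ := fun i => if h : i ∈ S then v ⟨i, h⟩ else 0 with hy
    have hy0 : y ≠ 0 := by
      intro h
      apply hv
      funext i
      have := congrFun h i.val
      simpa [hy, i.prop] using this
    have key : star y ⬝ᵥ (M *ᵥ y)
        = star v ⬝ᵥ (M.submatrix (Subtype.val : S → Fin N) Subtype.val *ᵥ v) := by
      simp only [dotProduct, mulVec, star_trivial]
      rw [sum_extend_aux S _ (fun i hi => by simp [hy, hi])]
      refine Finset.sum_congr rfl (fun i _ => ?_)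
      have hyi : y i.val = v i := by simp [hy, i.prop]
      rw [hyi]
      congr 1
      rw [sum_extend_aux S _ (fun j hj => by simp [hy, hj])]
      refine Finset.sum_congr rfl (fun j _ => ?_)
      simp [hy, j.prop]
    rw [← key]
    exact hpd.dotProduct_mulVec_pos hy0

/-- **Lemma 6.13 specialized to the smooth case (generic block descent lemma).**
If `f` is `M`-smooth (with `M` symmetric positive definite) and `u` performs the exact
block update on the block `S` (i.e. `u_S = −(M_S)⁻¹(∇f(x))_S`, `u_i = 0` off `S`), then
`f(x+u) − f(x*) ≤ (f(x) − f(x*)) − (1/2)·g_Sᵀ(M_S)⁻¹g_S`, and hence when `f(x) > f(x*)`: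
`f(x+u) − f(x*) ≤ (1 − θ(S,x)·μ(x))·(f(x) − f(x*))`. -/
theorem stmt_15 (N : ℕ) (M : Matrix (Fin N) (Fin N) ℝ)
    (hsym : M.IsSymm) (hpd : M.PosDef)
    (f : EuclideanSpace ℝ (Fin N) → ℝ) (hdiff : Differentiable ℝ f)
    (hsmooth : ∀ x h : EuclideanSpace ℝ (Fin N),
      f (x + h) ≤ f x + ⟪gradient f x, h⟫ + (1 / 2) * ∑ i, ∑ j, h i * M i j * h j)
    (xstar : EuclideanSpace ℝ (Fin N)) (hmin : ∀ y, f xstar ≤ f y)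
    (x : EuclideanSpace ℝ (Fin N)) (S : Finset (Fin N)) (hS : S.Nonempty)
    (MS : Matrix S S ℝ) (hMS : ∀ i j : S, MS i j = M i.val j.val)
    (gS : S → ℝ) (hgS : ∀ i : S, gS i = gradient f x i.val)
    (u : EuclideanSpace ℝ (Fin N))
    (hu : ∀ i : Fin N, u i = if h : i ∈ S then -((MS⁻¹ *ᵥ gS) ⟨i, h⟩) else 0) :
    f (x + u) - f xstar ≤ (f x - f xstar) - (1 / 2) * (gS ⬝ᵥ (MS⁻¹ *ᵥ gS)) ∧
    (f xstar < f x →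
      f (x + u) - f xstar ≤
        (1 - ((gS ⬝ᵥ (MS⁻¹ *ᵥ gS)) / ‖gradient f x‖ ^ 2) *
          (‖gradient f x‖ ^ 2 / (2 * (f x - f xstar)))) * (f x - f xstar)) := by
  have hMSeq : MS = M.submatrix (Subtype.val : S → Fin N) Subtype.val := by
    ext i j; simp [hMS]
  have hMSpd : MS.PosDef := hMSeq ▸ submatrix_posdef hpd S
  set v : S → ℝ := MS⁻¹ *ᵥ gS with hv
  have hMv : MS *ᵥ v = gS := by
    rw [hv, mulVec_mulVec, Matrix.mul_nonsing_inv _ hMSpd.det_pos.ne'.isUnit, one_mulVec]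
  set Q : ℝ := gS ⬝ᵥ v with hQ
  have hinner : ⟪gradient f x, u⟫ = -Q := by
    simp only [PiLp.inner_apply, RCLike.inner_apply, conj_trivial]
    rw [sum_extend_aux S _ (fun i hi => by simp [hu i, hi])]
    rw [hQ, dotProduct, ← Finset.sum_neg_distrib]
    refine Finset.sum_congr rfl (fun i _ => ?_)
    rw [hu i.val]
    simp [hgS i]
    ring
  have hquad : ∑ i, ∑ j, u i * M i j * u j = Q := by
    rw [sum_extend_aux S _ (fun i hi => by simp [hu i, hi])]
    have : ∀ i : S, (∑ j, u i.val * M i.val j * u j) = v i * ∑ j : S, MS i j * v j := by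
      intro i
      rw [sum_extend_aux S _ (fun j hj => by simp [hu j, hj])]
      rw [Finset.mul_sum]
      refine Finset.sum_congr rfl (fun j _ => ?_)
      rw [hu i.val, hu j.val]
      simp [hMS i j, i.prop, j.prop]
      ring
    rw [Finset.sum_congr rfl (fun i _ => this i), ← Finset.univ_eq_attach]
    have h2 : (∑ i : S, v i * ∑ j : S, MS i j * v j) = v ⬝ᵥ (MS *ᵥ v) := by
      simp [dotProduct, mulVec]
    rw [h2, hMv, dotProduct_comm, hQ]
  have hdesc : f (x + u) ≤ f x - (1/2) * Q := by
    have := hsmooth x u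
    rw [hinner, hquad] at this
    linarith
  have hstar := hmin (x + u)
  constructor
  · linarith
  · intro hfx
    by_cases hg : ‖gradient f x‖ = 0
    · have hg0 : gradient f x = 0 := norm_eq_zero.mp hg
      have hgS0 : gS = 0 := by
        funext i; rw [hgS i, hg0]; rfl
      have hQ0 : Q = 0 := by rw [hQ, hgS0, zero_dotProduct]
      rw [hQ0] at hdesc ⊢
      simp
      linarith
    · have hn : (‖gradient f x‖ : ℝ) ^ 2 ≠ 0 := pow_ne_zero 2 hg
      have hD : f x - f xstar > 0 := by linarith
      have : (1 - (Q / ‖gradient f x‖ ^ 2) *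
          (‖gradient f x‖ ^ 2 / (2 * (f x - f xstar)))) * (f x - f xstar)
          = (f x - f xstar) - (1/2) * Q := by
        field_simp
      rw [this]
      linarith
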